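/- Let k, t > 0, let a ∈ (kt, 3kt/2) and set a' := 2kt − a. Define, for x ∈ [0, k²t²/4), h(x) := k² (a² + a'² − 2k²t² + 2x) / (√((a² − k²t² + x)² + 4k²(t²+1)x) · √((a'² − k²t² + x)² + 4k²(t²+1)x)). Then h is monotonically nonincreasing on [0, k²t²/4), i.e., for all 0 ≤ x ≤ y < k²t²/4 one has h(y) ≤ h(x). -/
import Mathlib


/-- The modulus `h(ξ_d²)` of the symmetrized symbol, written with `a = ‖ξ⁻‖`,
`a' = 2kt − a` and `x = ξ_d²`. -/
noncomputable def hFun (k t a : ℝ) (x : ℝ) : ℝ :=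
  k ^ 2 * (a ^ 2 + (2 * k * t - a) ^ 2 - 2 * k ^ 2 * t ^ 2 + 2 * x)
    / (Real.sqrt ((a ^ 2 - k ^ 2 * t ^ 2 + x) ^ 2 + 4 * k ^ 2 * (t ^ 2 + 1) * x)
      * Real.sqrt (((2 * k * t - a) ^ 2 - k ^ 2 * t ^ 2 + x) ^ 2
        + 4 * k ^ 2 * (t ^ 2 + 1) * x))

private lemma sqrt_form (C D E : ℝ) (hC : 0 ≤ C) (hD : 0 ≤ D) :
    C * (Real.sqrt D * Real.sqrt E) = Real.sqrt (C ^ 2 * (D * E)) := by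
  rw [Real.sqrt_mul (sq_nonneg C), Real.sqrt_sq hC, Real.sqrt_mul hD]

set_option maxHeartbeats 2000000 in
/-- The function `h` is monotonically nonincreasing on `[0, k²t²/4)`. -/
theorem stmt_9 (k t a : ℝ) (hk : 0 < k) (ht : 0 < t)
    (ha : k * t < a) (ha' : a < 3 * k * t / 2) :
    ∀ x y : ℝ, 0 ≤ x → x ≤ y → y < k ^ 2 * t ^ 2 / 4 →
      hFun k t a y ≤ hFun k t a x := by
  intro x y hx hxy hy
  have hy0 : 0 ≤ y := hx.trans hxy
  have hkt : 0 < k * t := mul_pos hk ht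
  have hakt : 0 < a := hkt.trans ha
  -- positivity of the radicands
  have hA : ∀ z : ℝ, 0 ≤ z →
      0 < (a ^ 2 - k ^ 2 * t ^ 2 + z) ^ 2 + 4 * k ^ 2 * (t ^ 2 + 1) * z := by
    intro z hz
    have h1 : 0 < a ^ 2 - k ^ 2 * t ^ 2 + z := by nlinarith
    positivity
  have hB : ∀ z : ℝ, 0 ≤ z →
      0 < ((2 * k * t - a) ^ 2 - k ^ 2 * t ^ 2 + z) ^ 2 + 4 * k ^ 2 * (t ^ 2 + 1) * z := by
    intro z hz
    rcases hz.lt_or_eq with h | h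
    · have h2 : 0 < 4 * k ^ 2 * (t ^ 2 + 1) * z := by positivity
      nlinarith [sq_nonneg ((2 * k * t - a) ^ 2 - k ^ 2 * t ^ 2 + z)]
    · rw [← h]
      have h3 : (2 * k * t - a) ^ 2 - k ^ 2 * t ^ 2 < 0 := by nlinarith
      nlinarith
  have hN : ∀ z : ℝ, 0 ≤ z →
      0 < a ^ 2 + (2 * k * t - a) ^ 2 - 2 * k ^ 2 * t ^ 2 + 2 * z := by
    intro z hz
    nlinarith [pow_pos (sub_pos.mpr ha) 2]
  have hAx := hA x hx
  have hAy := hA y hy0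
  have hBx := hB x hx
  have hBy := hB y hy0
  have hNx := hN x hx
  have hNy := hN y hy0
  have hCx : 0 ≤ k ^ 2 * (a ^ 2 + (2 * k * t - a) ^ 2 - 2 * k ^ 2 * t ^ 2 + 2 * x) :=
    mul_nonneg (by positivity) hNx.le
  have hCy : 0 ≤ k ^ 2 * (a ^ 2 + (2 * k * t - a) ^ 2 - 2 * k ^ 2 * t ^ 2 + 2 * y) :=
    mul_nonneg (by positivity) hNy.le
  unfold hFun
  rw [div_le_div_iff₀
    (mul_pos (Real.sqrt_pos.mpr hAy) (Real.sqrt_pos.mpr hBy))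
    (mul_pos (Real.sqrt_pos.mpr hAx) (Real.sqrt_pos.mpr hBx))]
  rw [sqrt_form _ _ _ hCy hAx.le, sqrt_form _ _ _ hCx hAy.le]
  apply Real.sqrt_le_sqrt
  -- now a purely polynomial inequality
  have hyx : 0 ≤ y - x := sub_nonneg.mpr hxy
  obtain ⟨p, hp⟩ : ∃ p : ℝ, x = p ^ 2 := ⟨Real.sqrt x, (Real.sq_sqrt hx).symm⟩
  obtain ⟨w, hw⟩ : ∃ w : ℝ, y = p ^ 2 + w ^ 2 :=
    ⟨Real.sqrt (y - x), by rw [Real.sq_sqrt hyx, hp]; ring⟩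
  subst hp hw
  have H : (0:ℝ) ≤ 4 * k ^ 4 * w ^ 2 * (
      ((a - k*t)^2 * (p^2 + (p^2 + w^2) + (a - k*t)^2 + 4*(k^2*t^2)) + p^2*(p^2 + w^2))
        * ((((a - k*t)^2)^2 + (a - k*t)^2*(p^2 + (p^2 + w^2)) + p^2*(p^2 + w^2))
            * (2*(a - k*t)^2 + p^2 + (p^2 + w^2)))
      + 4*k^2*(a - k*t)^2*(p^2 + (p^2 + w^2))
          * ((a - k*t)^2*(p^2 + (p^2 + w^2) + (a - k*t)^2 + 4*k^2*(t^2+1) + 4*(k^2*t^2))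
              + p^2*(p^2 + w^2))
      + 32*k^2*(k^2*t^2)*((a - k*t)^2)^3
      + 8*k^2*((a - k*t)^2)^4
      + ((a - k*t)^2)^3*(p^2 + (p^2 + w^2))*(4*k^2*(t^2+3))
      + 4*((a - k*t)^2)^2*p^2*(p^2 + w^2)*(2*k^2*t^2 + 4*k^2)
      + 8*k^2*(4*k^2*(t^2+1))*(a - k*t)^2*p^2*(p^2 + w^2)
      + (4*k^2*(t^2+1))*((a - k*t)^2)^2*(p^2 + (p^2 + w^2))^2
      + 3*(4*k^2*(t^2+1))*(a - k*t)^2*p^2*(p^2 + w^2)*(p^2 + (p^2 + w^2))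
      + 2*(4*k^2*(t^2+1))*(p^2)^2*((p^2 + w^2))^2) := by positivity
  linarith [H]
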